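/- Let X be a topological space and let 𝓑 be a basis for the topology of X such that: (1) every B ∈ 𝓑 is compact and open; (2) 𝓑 is closed under binary intersections; (3) for all B₁, B₂ ∈ 𝓑 the set difference B₁ ∖ B₂ is a finite union of pairwise disjoint members of 𝓑. Then every compact open subset of X is a finite union of pairwise disjoint members of 𝓑. -/

import Mathlib

open Set

/-- Auxiliary: if `S` is a finite disjoint union of members of `𝓑` and `B ∈ 𝓑`,
then so is `S \ B`. -/
private lemma aux_diff_piece {X : Type*} (𝓑 : Set (Set X))
    (hdiff : ∀ B₁ ∈ 𝓑, ∀ B₂ ∈ 𝓑, ∃ F : Finset (Set X), ↑F ⊆ 𝓑 ∧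
      (F : Set (Set X)).Pairwise Disjoint ∧ B₁ \ B₂ = ⋃₀ ↑F)
    {S B : Set X} (hB : B ∈ 𝓑)
    (hS : ∃ F : Finset (Set X), ↑F ⊆ 𝓑 ∧ (F : Set (Set X)).Pairwise Disjoint ∧ S = ⋃₀ ↑F) :
    ∃ F : Finset (Set X), ↑F ⊆ 𝓑 ∧ (F : Set (Set X)).Pairwise Disjoint ∧
      S \ B = ⋃₀ ↑F := by
  classical
  obtain ⟨F, hF𝓑, hFdisj, rfl⟩ := hS
  have key : ∀ C : Set X, ∃ G : Finset (Set X), C ∈ 𝓑 →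
      (↑G ⊆ 𝓑 ∧ (G : Set (Set X)).Pairwise Disjoint ∧ C \ B = ⋃₀ ↑G) := by
    intro C
    by_cases hC : C ∈ 𝓑
    · obtain ⟨G, h⟩ := hdiff C hC B hB
      exact ⟨G, fun _ => h⟩
    · exact ⟨∅, fun h => absurd h hC⟩
  choose G hG using key
  refine ⟨F.biUnion G, ?_, ?_, ?_⟩
  · intro D hD
    simp only [Finset.coe_biUnion, mem_iUnion] at hD
    obtain ⟨C, hC, hDC⟩ := hD
    exact (hG C (hF𝓑 hC)).1 hDC
  · intro D hD D' hD' hne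
    simp only [Finset.coe_biUnion, mem_iUnion] at hD hD'
    obtain ⟨C, hC, hDC⟩ := hD
    obtain ⟨C', hC', hDC'⟩ := hD'
    have hDsub : D ⊆ C \ B := by
      rw [(hG C (hF𝓑 hC)).2.2]; exact subset_sUnion_of_mem hDC
    have hDsub' : D' ⊆ C' \ B := by
      rw [(hG C' (hF𝓑 hC')).2.2]; exact subset_sUnion_of_mem hDC'
    by_cases hCC : C = C'
    · subst hCC
      exact (hG C (hF𝓑 hC)).2.1 hDC hDC' hne
    · have : Disjoint C C' := hFdisj hC hC' hCC
      exact (this.mono (hDsub.trans diff_subset) (hDsub'.trans diff_subset))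
  · ext x
    simp only [mem_diff, mem_sUnion, Finset.mem_coe, Finset.mem_biUnion]
    constructor
    · rintro ⟨⟨C, hC, hxC⟩, hxB⟩
      have : x ∈ ⋃₀ (↑(G C) : Set (Set X)) := by
        rw [← (hG C (hF𝓑 hC)).2.2]; exact ⟨hxC, hxB⟩
      obtain ⟨D, hD, hxD⟩ := this
      exact ⟨D, ⟨C, hC, hD⟩, hxD⟩
    · rintro ⟨D, ⟨C, hC, hD⟩, hxD⟩
      have hx : x ∈ C \ B := by
        rw [(hG C (hF𝓑 hC)).2.2]; exact ⟨D, hD, hxD⟩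
      exact ⟨⟨C, hC, hx.1⟩, hx.2⟩

/-- Let `X` be a topological space and `𝓑` a basis for its topology such that
(1) every member of `𝓑` is compact and open, (2) `𝓑` is closed under binary intersections, and
(3) the set difference of any two members of `𝓑` is a finite union of pairwise disjoint members
of `𝓑`.  Then every compact open subset of `X` is a finite union of pairwise disjoint members
of `𝓑`. -/
theorem compact_open_eq_finite_disjoint_union_of_basis
    {X : Type*} [TopologicalSpace X] (𝓑 : Set (Set X))
    (hbasis : TopologicalSpace.IsTopologicalBasis 𝓑)
    (hcompact_open : ∀ B ∈ 𝓑, IsCompact B ∧ IsOpen B)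
    (hinter : ∀ B₁ ∈ 𝓑, ∀ B₂ ∈ 𝓑, B₁ ∩ B₂ ∈ 𝓑)
    (hdiff : ∀ B₁ ∈ 𝓑, ∀ B₂ ∈ 𝓑, ∃ F : Finset (Set X), ↑F ⊆ 𝓑 ∧
      (F : Set (Set X)).Pairwise Disjoint ∧ B₁ \ B₂ = ⋃₀ ↑F) :
    ∀ U : Set X, IsCompact U → IsOpen U →
      ∃ F : Finset (Set X), ↑F ⊆ 𝓑 ∧ (F : Set (Set X)).Pairwise Disjoint ∧ U = ⋃₀ ↑F := by
  classical
  intro U hUc hUo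
  have hb : TopologicalSpace.IsTopologicalBasis
      (Set.range (fun B : 𝓑 => (B : Set X))) := by
    rwa [Subtype.range_coe]
  obtain ⟨s, hsfin, hsU⟩ :=
    eq_finite_iUnion_of_isTopologicalBasis_of_isCompact_open _ hb U hUc hUo
  obtain ⟨t, rfl⟩ := hsfin.exists_finset_coe
  clear hUc hUo hsfin
  subst hsU
  induction t using Finset.induction with
  | empty => exact ⟨∅, by simp, by simp, by simp⟩
  | @insert B t hBt ih =>
    obtain ⟨F, hF𝓑, hFdisj, hFU⟩ := ih
    set T : Set X := ⋃ i ∈ (t : Set 𝓑), (i : Set X) with hT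
    obtain ⟨G, hG𝓑, hGdisj, hGU⟩ :=
      aux_diff_piece 𝓑 hdiff B.2 ⟨F, hF𝓑, hFdisj, hFU⟩
    refine ⟨insert (B : Set X) G, ?_, ?_, ?_⟩
    · intro D hD
      rcases Finset.mem_insert.1 (by exact_mod_cast hD) with h | h
      · exact h ▸ B.2
      · exact hG𝓑 h
    · rw [Finset.coe_insert]
      refine (Set.pairwise_insert_of_symm (r := Disjoint)).2 ⟨hGdisj, ?_⟩
      intro D hD _
      have hDsub : D ⊆ T \ (B : Set X) := by
        rw [hGU]; exact subset_sUnion_of_mem hD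
      exact (disjoint_sdiff_left.mono_left hDsub).symm
    · simp only [Finset.coe_insert]
      rw [biUnion_insert, sUnion_insert, ← hGU, ← hT, union_diff_self]
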